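/- Let J = S \ {s_i} and let u, v ∈ (S_n)^J with u ≤ v in the Bruhat order. Define D(u,v) = v^{-1}([i]) \ u^{-1}([i]) and, for 1 ≤ j ≤ n, a_j(u,v) = |{r ∈ u^{-1}([i]) : r < j}| − |{r ∈ v^{-1}([i]) : r < j}|. Then the parabolic R-polynomial satisfies R^{J,q}_{u,v}(q) = (−1)^{ℓ(v)−ℓ(u)} ∏_{j ∈ D(u,v)} (1 − q^{a_j(u,v)}). -/

import Mathlib

open Finset Polynomial

/-- The inversion number (Coxeter length) of a permutation of `ℕ`, counted on `{1, …, n}`. -/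
def invNum (n : ℕ) (u : Equiv.Perm ℕ) : ℕ :=
  (((Finset.Icc 1 n) ×ˢ (Finset.Icc 1 n)).filter
    (fun p => p.1 < p.2 ∧ u p.2 < u p.1)).card

/-- `u` is a member of `S_n`: it fixes every point outside `{1, …, n}`. -/
def IsPermOn (n : ℕ) (u : Equiv.Perm ℕ) : Prop :=
  ∀ m, m ∉ Finset.Icc 1 n → u m = m

/-- The adjacent transposition `s_i`, interchanging `i` and `i + 1`. -/
def sAdj (i : ℕ) : Equiv.Perm ℕ := Equiv.swap i (i + 1)

/-- The Bruhat order on `S_n`: `u ≤ v` iff `v` is obtained from `u` by successively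
multiplying on the right by transpositions, increasing the length at each step. -/
def BruhatLE (n : ℕ) (u v : Equiv.Perm ℕ) : Prop :=
  Relation.ReflTransGen
    (fun a b => invNum n a < invNum n b ∧
      ∃ i j, 1 ≤ i ∧ i < j ∧ j ≤ n ∧ b = a * Equiv.swap i j) u v

/-- `(S_n)^J`, the minimal coset representatives, where `J = S \ {s_e : e ∈ E}`. -/
def MinReps (n : ℕ) (E : Set ℕ) (u : Equiv.Perm ℕ) : Prop :=
  ∀ j, 1 ≤ j → j ≤ n - 1 → j ∉ E → invNum n u < invNum n (sAdj j * u)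

/-- `|{r ∈ u⁻¹([m]) : r < j}|`, the number of positions `r < j` of `u` holding
an element of `{1, …, m}`. -/
def posLT (n m j : ℕ) (u : Equiv.Perm ℕ) : ℕ :=
  ((Finset.Icc 1 n).filter (fun r => r < j ∧ u r ∈ Finset.Icc 1 m)).card

/-- Deodhar's recursion with `x = q` for the parabolic `R`-polynomials of `S_n`,
for `J = S \ {s_e : e ∈ E}`. -/
def IsRFamilyQ (n : ℕ) (E : Set ℕ)
    (R : Equiv.Perm ℕ → Equiv.Perm ℕ → Polynomial ℤ) : Prop :=
  (∀ u v, MinReps n E u → MinReps n E v → ¬ BruhatLE n u v → R u v = 0) ∧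
  (∀ u, MinReps n E u → R u u = 1) ∧
  (∀ u v, MinReps n E u → MinReps n E v → BruhatLE n u v → u ≠ v →
    ∀ j, 1 ≤ j → j ≤ n - 1 → v (j + 1) < v j →
      ((u (j + 1) < u j → R u v = R (u * sAdj j) (v * sAdj j)) ∧
       (¬ u (j + 1) < u j → MinReps n E (u * sAdj j) →
          R u v = X * R (u * sAdj j) (v * sAdj j) + (X - 1) * R u (v * sAdj j)) ∧
       (¬ u (j + 1) < u j → ¬ MinReps n E (u * sAdj j) →
          R u v = - R u (v * sAdj j))))


theorem Equiv.Perm.inv_apply_self {α : Type*} (f : Equiv.Perm α) (x : α) : f⁻¹ (f x) = x :=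
  f.symm_apply_apply x

theorem Equiv.Perm.apply_inv_self {α : Type*} (f : Equiv.Perm α) (x : α) : f (f⁻¹ x) = x :=
  f.apply_symm_apply x

theorem Equiv.inv_apply_self {α : Type*} (f : Equiv.Perm α) (x : α) : f⁻¹ (f x) = x :=
  f.symm_apply_apply x

theorem Equiv.apply_inv_self {α : Type*} (f : Equiv.Perm α) (x : α) : f (f⁻¹ x) = x :=
  f.apply_symm_apply x

namespace Brenti

open Finset Polynomial Equiv

/-! ### Basic permutation-on-[1,n] lemmas -/

lemma permOn_apply_mem {n : ℕ} {w : Equiv.Perm ℕ} (hw : IsPermOn n w) {r : ℕ}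
    (hr : r ∈ Finset.Icc 1 n) : w r ∈ Finset.Icc 1 n := by
  by_contra h
  have h2 := hw (w r) h
  have h3 := w.injective h2
  exact h (by rwa [h3])

lemma permOn_inv {n : ℕ} {w : Equiv.Perm ℕ} (hw : IsPermOn n w) : IsPermOn n w⁻¹ := by
  intro m hm
  have := hw m hm
  calc w⁻¹ m = w⁻¹ (w m) := by rw [this]
  _ = m := w.inv_apply_self m

lemma permOn_inv_mem {n : ℕ} {w : Equiv.Perm ℕ} (hw : IsPermOn n w) {r : ℕ}
    (hr : r ∈ Finset.Icc 1 n) : w⁻¹ r ∈ Finset.Icc 1 n :=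
  permOn_apply_mem (permOn_inv hw) hr

lemma permOn_mul_swap {n x y : ℕ} {w : Equiv.Perm ℕ} (hw : IsPermOn n w)
    (hx : x ∈ Finset.Icc 1 n) (hy : y ∈ Finset.Icc 1 n) :
    IsPermOn n (w * Equiv.swap x y) := by
  intro m hm
  have hmx : m ≠ x := fun h => hm (h ▸ hx)
  have hmy : m ≠ y := fun h => hm (h ▸ hy)
  have : (w * Equiv.swap x y) m = w m := by
    rw [Equiv.Perm.mul_apply, Equiv.swap_apply_of_ne_of_ne hmx hmy]
  rw [this]; exact hw m hm

lemma permOn_pos {n : ℕ} {w : Equiv.Perm ℕ} (hw : IsPermOn n w) {r : ℕ}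
    (hr : r ∈ Finset.Icc 1 n) : 1 ≤ w r ∧ w r ≤ n := by
  have := permOn_apply_mem hw hr; rwa [Finset.mem_Icc] at this

/-- adjacent swap preserves the order of any pair other than (j, j+1) -/
lemma swap_adj_lt {j c d : ℕ} (hcd : c < d) (h : ¬ (c = j ∧ d = j + 1)) :
    Equiv.swap j (j+1) c < Equiv.swap j (j+1) d := by
  simp only [Equiv.swap_apply_def]
  split_ifs <;> omega

open Finset Polynomial Equiv

def Invs (n : ℕ) (w : Equiv.Perm ℕ) : Finset (ℕ × ℕ) :=
  ((Finset.Icc 1 n) ×ˢ (Finset.Icc 1 n)).filter (fun p => p.1 < p.2 ∧ w p.2 < w p.1)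

lemma invNum_eq_card (n : ℕ) (w : Equiv.Perm ℕ) : invNum n w = (Invs n w).card := rfl

lemma mem_Invs {n : ℕ} {w : Equiv.Perm ℕ} {p : ℕ × ℕ} :
    p ∈ Invs n w ↔ ((1 ≤ p.1 ∧ p.1 ≤ n) ∧ (1 ≤ p.2 ∧ p.2 ≤ n)) ∧ p.1 < p.2 ∧ w p.2 < w p.1 := by
  simp [Invs, Finset.mem_filter, Finset.mem_product, Finset.mem_Icc]

lemma swap_adj_lt_iff {j c d : ℕ} :
    Equiv.swap j (j+1) c < Equiv.swap j (j+1) d ↔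
      ((c < d ∧ ¬(c = j ∧ d = j+1)) ∨ (c = j+1 ∧ d = j)) := by
  simp only [Equiv.swap_apply_def]
  split_ifs <;> omega

lemma invNum_lt_mul_swap {n x y : ℕ} {a : Equiv.Perm ℕ} (hx : 1 ≤ x) (hxy : x < y)
    (hyn : y ≤ n) (hv : a x < a y) : invNum n a < invNum n (a * Equiv.swap x y) := by
  classical
  set b := a * Equiv.swap x y with hb
  have hbx : b x = a y := by rw [hb, Equiv.Perm.mul_apply, Equiv.swap_apply_left]
  have hby : b y = a x := by rw [hb, Equiv.Perm.mul_apply, Equiv.swap_apply_right]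
  have hbo : ∀ r, r ≠ x → r ≠ y → b r = a r := fun r h1 h2 => by
    rw [hb, Equiv.Perm.mul_apply, Equiv.swap_apply_of_ne_of_ne h1 h2]
  set f : ℕ × ℕ → ℕ × ℕ := fun p =>
    if p.2 = x then (p.1, y)
    else if p.1 < x ∧ p.2 = y then (p.1, x)
    else if p.1 = x ∧ y < p.2 then (y, p.2)
    else if p.1 = y then (x, p.2)
    else p with hf
  have hmapsto : ∀ p ∈ Invs n a, f p ∈ Invs n b ∧ f p ≠ (x, y) := by
    rintro ⟨p, q⟩ hm
    rw [mem_Invs] at hm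
    dsimp only at hm
    obtain ⟨⟨⟨hp1, hp2⟩, hq1, hq2⟩, hpq, hinv⟩ := hm
    have hne : a q ≠ a p := fun h => (by omega : p ≠ q) (a.injective h).symm
    simp only [hf]
    split_ifs with h1 h2 h3 h4
    · -- q = x
      subst h1
      constructor
      · rw [mem_Invs]
        dsimp only
        refine ⟨⟨⟨hp1, hp2⟩, by omega, by omega⟩, by omega, ?_⟩
        rw [hby, hbo p (by omega) (by omega)]
        omega
      · intro hc; rw [Prod.mk.injEq] at hc; omega
    · -- p < x, q = y
      obtain ⟨hpx, rfl⟩ := h2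
      constructor
      · rw [mem_Invs]
        dsimp only
        refine ⟨⟨⟨hp1, hp2⟩, by omega, by omega⟩, by omega, ?_⟩
        rw [hbx, hbo p (by omega) (by omega)]
        omega
      · intro hc; rw [Prod.mk.injEq] at hc; omega
    · -- p = x, y < q
      obtain ⟨rfl, hyq⟩ := h3
      constructor
      · rw [mem_Invs]
        dsimp only
        refine ⟨⟨⟨by omega, by omega⟩, hq1, hq2⟩, by omega, ?_⟩
        rw [hby, hbo q (by omega) (by omega)]
        omega
      · intro hc; rw [Prod.mk.injEq] at hc; omega
    · -- p = y
      subst h4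
      constructor
      · rw [mem_Invs]
        dsimp only
        refine ⟨⟨⟨by omega, by omega⟩, hq1, hq2⟩, by omega, ?_⟩
        rw [hbx, hbo q (by omega) (by omega)]
        omega
      · intro hc; rw [Prod.mk.injEq] at hc; omega
    · -- identity branch
      constructor
      · rw [mem_Invs]
        dsimp only
        refine ⟨⟨⟨hp1, hp2⟩, hq1, hq2⟩, hpq, ?_⟩
        rcases eq_or_ne p x with rfl | hpx
        · -- p = x; q ≠ x, ¬(q = y with p<x false ok), ¬(y < q), q ≠ y?
          rcases eq_or_ne q y with rfl | hqy
          · omega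
          · -- x < q < y
            rw [hbx, hbo q h1 hqy]
            omega
        · rcases eq_or_ne q y with rfl | hqy
          · -- q = y, x < p < y (p ≠ x; ¬(p < x ∧ q = y) gives ¬ p < x)
            rw [hby, hbo p hpx (by omega)]
            omega
          · rw [hbo p hpx (by omega), hbo q h1 hqy]
            exact hinv
      · intro hc; rw [Prod.mk.injEq] at hc
        obtain ⟨rfl, rfl⟩ := hc
        omega
  have hinj : Set.InjOn f (Invs n a) := by
    rintro ⟨p, q⟩ hp ⟨p', q'⟩ hq heq
    rw [Finset.mem_coe, mem_Invs] at hp hq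
    dsimp only at hp hq
    obtain ⟨⟨⟨hp1, hp2⟩, hq1, hq2⟩, hpq, -⟩ := hp
    obtain ⟨⟨⟨hp1', hp2'⟩, hq1', hq2'⟩, hpq', -⟩ := hq
    simp only [hf] at heq
    split_ifs at heq <;>
      (rw [Prod.mk.injEq] at heq ⊢; omega)
  have hxyT : (x, y) ∈ Invs n b := by
    rw [mem_Invs]
    exact ⟨⟨⟨hx, by omega⟩, by omega, hyn⟩, hxy, by rw [hbx, hby]; exact hv⟩
  have hsub : (Invs n a).image f ⊆ (Invs n b).erase (x, y) := by
    intro r hr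
    rw [Finset.mem_image] at hr
    obtain ⟨p, hpS, rfl⟩ := hr
    rw [Finset.mem_erase]
    exact ⟨(hmapsto p hpS).2, (hmapsto p hpS).1⟩
  have h1 : (Invs n a).card = ((Invs n a).image f).card :=
    (Finset.card_image_of_injOn hinj).symm
  have h2 : ((Invs n a).image f).card ≤ ((Invs n b).erase (x, y)).card :=
    Finset.card_le_card hsub
  have h3 : ((Invs n b).erase (x, y)).card = (Invs n b).card - 1 :=
    Finset.card_erase_of_mem hxyT
  have h4 : 1 ≤ (Invs n b).card := Finset.card_pos.mpr ⟨_, hxyT⟩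
  rw [invNum_eq_card, invNum_eq_card]
  omega

lemma apply_lt_of_invNum_lt {n x y : ℕ} {b : Equiv.Perm ℕ} (hx : 1 ≤ x) (hxy : x < y)
    (hyn : y ≤ n) (h : invNum n b < invNum n (b * Equiv.swap x y)) : b x < b y := by
  rcases lt_trichotomy (b x) (b y) with h1 | h1 | h1
  · exact h1
  · exact absurd (b.injective h1) (by omega)
  · exfalso
    set c := b * Equiv.swap x y with hc
    have hcx : c x = b y := by rw [hc, Equiv.Perm.mul_apply, Equiv.swap_apply_left]
    have hcy : c y = b x := by rw [hc, Equiv.Perm.mul_apply, Equiv.swap_apply_right]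
    have h2 : invNum n c < invNum n (c * Equiv.swap x y) :=
      invNum_lt_mul_swap hx hxy hyn (by omega)
    have h3 : c * Equiv.swap x y = b := by
      rw [hc, mul_assoc, Equiv.swap_mul_self, mul_one]
    rw [h3] at h2
    omega

open Finset Polynomial Equiv

lemma sAdj_mem_Icc {n m r : ℕ} (hm : 1 ≤ m) (hmn : m + 1 ≤ n) (hr : r ∈ Finset.Icc 1 n) :
    sAdj m r ∈ Finset.Icc 1 n := by
  rw [Finset.mem_Icc] at hr ⊢
  rcases eq_or_ne r m with rfl | h1
  · rw [sAdj, Equiv.swap_apply_left]; omega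
  · rcases eq_or_ne r (m+1) with rfl | h2
    · rw [sAdj, Equiv.swap_apply_right]; omega
    · rw [sAdj, Equiv.swap_apply_of_ne_of_ne h1 h2]; omega

lemma invNum_mul_sAdj_asc {n m : ℕ} {w : Equiv.Perm ℕ} (hm : 1 ≤ m) (hmn : m + 1 ≤ n)
    (h : w m < w (m+1)) : invNum n (w * sAdj m) = invNum n w + 1 := by
  have hlow : invNum n w < invNum n (w * sAdj m) := by
    rw [sAdj]
    exact invNum_lt_mul_swap hm (by omega) hmn h
  have hpair : (m, m+1) ∈ Invs n (w * sAdj m) := by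
    rw [mem_Invs]
    dsimp only
    refine ⟨⟨⟨hm, by omega⟩, by omega, hmn⟩, by omega, ?_⟩
    have e1 : (w * sAdj m) m = w (m+1) := by
      rw [Equiv.Perm.mul_apply, sAdj, Equiv.swap_apply_left]
    have e2 : (w * sAdj m) (m+1) = w m := by
      rw [Equiv.Perm.mul_apply, sAdj, Equiv.swap_apply_right]
    rw [e1, e2]; exact h
  have hup : ((Invs n (w * sAdj m)).erase (m, m+1)).card ≤ (Invs n w).card := by
    apply Finset.card_le_card_of_injOn (fun p => (sAdj m p.1, sAdj m p.2))
    · rintro ⟨p, q⟩ hpq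
      rw [Finset.mem_coe, Finset.mem_erase, mem_Invs] at hpq
      dsimp only at hpq
      obtain ⟨hne, ⟨⟨hp1, hp2⟩, hq1, hq2⟩, hpq', hinv⟩ := hpq
      rw [Finset.mem_coe, mem_Invs]
      dsimp only
      have hmem1 := sAdj_mem_Icc hm hmn (Finset.mem_Icc.mpr ⟨hp1, hp2⟩)
      have hmem2 := sAdj_mem_Icc hm hmn (Finset.mem_Icc.mpr ⟨hq1, hq2⟩)
      rw [Finset.mem_Icc] at hmem1 hmem2
      have hnotsp : ¬ (p = m ∧ q = m + 1) := by
        intro hc; exact hne (by rw [Prod.mk.injEq]; omega)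
      have hlt : sAdj m p < sAdj m q := by
        rw [sAdj]; exact swap_adj_lt hpq' hnotsp
      refine ⟨⟨hmem1, hmem2⟩, hlt, ?_⟩
      have e1 : w (sAdj m p) = (w * sAdj m) p := (Equiv.Perm.mul_apply _ _ _).symm
      have e2 : w (sAdj m q) = (w * sAdj m) q := (Equiv.Perm.mul_apply _ _ _).symm
      rw [e1, e2]; exact hinv
    · rintro ⟨p, q⟩ - ⟨p', q'⟩ - heq
      rw [Prod.mk.injEq] at heq ⊢
      obtain ⟨h1, h2⟩ := heq
      exact ⟨(sAdj m).injective h1, (sAdj m).injective h2⟩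
  rw [invNum_eq_card, invNum_eq_card] at *
  rw [Finset.card_erase_of_mem hpair] at hup
  omega

lemma invNum_mul_sAdj_desc {n m : ℕ} {w : Equiv.Perm ℕ} (hm : 1 ≤ m) (hmn : m + 1 ≤ n)
    (h : w (m+1) < w m) : invNum n w = invNum n (w * sAdj m) + 1 := by
  have e1 : (w * sAdj m) m = w (m+1) := by
    rw [Equiv.Perm.mul_apply, sAdj, Equiv.swap_apply_left]
  have e2 : (w * sAdj m) (m+1) = w m := by
    rw [Equiv.Perm.mul_apply, sAdj, Equiv.swap_apply_right]
  have h2 := invNum_mul_sAdj_asc (w := w * sAdj m) hm hmn (by rw [e1, e2]; exact h)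
  have e3 : w * sAdj m * sAdj m = w := by
    rw [mul_assoc, sAdj, Equiv.swap_mul_self, mul_one]
  rw [e3] at h2
  exact h2

lemma permOn_sAdj_mul {n m : ℕ} {w : Equiv.Perm ℕ} (hw : IsPermOn n w)
    (hm : 1 ≤ m) (hmn : m + 1 ≤ n) : IsPermOn n (sAdj m * w) := by
  intro r hr
  have h1 := hw r hr
  have h2 : (sAdj m * w) r = sAdj m r := by rw [Equiv.Perm.mul_apply, h1]
  rw [h2, sAdj, Equiv.swap_apply_of_ne_of_ne]
  · intro hc; subst hc; exact hr (Finset.mem_Icc.mpr ⟨hm, by omega⟩)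
  · intro hc; subst hc; exact hr (Finset.mem_Icc.mpr ⟨by omega, hmn⟩)

lemma invNum_sAdj_mul_asc {n m : ℕ} {w : Equiv.Perm ℕ} (hw : IsPermOn n w)
    (hm : 1 ≤ m) (hmn : m + 1 ≤ n) (h : w⁻¹ m < w⁻¹ (m+1)) :
    invNum n (sAdj m * w) = invNum n w + 1 := by
  have hP0 : (w⁻¹ m, w⁻¹ (m+1)) ∈ Invs n (sAdj m * w) ∧ (w⁻¹ m, w⁻¹ (m+1)) ∉ Invs n w := by
    have hb1 := permOn_inv_mem hw (Finset.mem_Icc.mpr ⟨hm, by omega⟩)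
    have hb2 := permOn_inv_mem hw (Finset.mem_Icc.mpr (⟨by omega, hmn⟩ : 1 ≤ m+1 ∧ m+1 ≤ n))
    rw [Finset.mem_Icc] at hb1 hb2
    constructor
    · rw [mem_Invs]; dsimp only
      refine ⟨⟨hb1, hb2⟩, h, ?_⟩
      rw [Equiv.Perm.mul_apply, Equiv.Perm.mul_apply, Equiv.Perm.apply_inv_self,
        Equiv.Perm.apply_inv_self, sAdj, Equiv.swap_apply_left, Equiv.swap_apply_right]
      omega
    · rw [mem_Invs]; dsimp only
      rw [Equiv.Perm.apply_inv_self, Equiv.Perm.apply_inv_self]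
      intro hc
      omega
  have hset : Invs n (sAdj m * w) = insert (w⁻¹ m, w⁻¹ (m+1)) (Invs n w) := by
    ext ⟨p, q⟩
    rw [Finset.mem_insert, mem_Invs, mem_Invs, Prod.mk.injEq]
    dsimp only
    have key : ∀ r, (sAdj m * w) r = Equiv.swap m (m+1) (w r) := by
      intro r; rw [Equiv.Perm.mul_apply, sAdj]
    constructor
    · rintro ⟨hbd, hpq, hinv⟩
      rw [key, key, swap_adj_lt_iff] at hinv
      rcases hinv with ⟨hlt, -⟩ | ⟨h1, h2⟩
      · exact Or.inr ⟨hbd, hpq, hlt⟩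
      · left
        constructor
        · rw [← h2, Equiv.Perm.inv_apply_self]
        · rw [← h1, Equiv.Perm.inv_apply_self]
    · rintro (⟨hp, hq⟩ | ⟨hbd, hpq, hinv⟩)
      · subst hp; subst hq
        rcases hP0.1 |> (fun hh => (mem_Invs).mp hh) with ⟨hbd, hpq, hinv⟩
        exact ⟨hbd, hpq, hinv⟩
      · refine ⟨hbd, hpq, ?_⟩
        rw [key, key, swap_adj_lt_iff]
        left
        refine ⟨hinv, ?_⟩
        rintro ⟨h1, h2⟩
        have e1 : q = w⁻¹ m := by rw [← h1, Equiv.Perm.inv_apply_self]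
        have e2 : p = w⁻¹ (m+1) := by rw [← h2, Equiv.Perm.inv_apply_self]
        omega
  rw [invNum_eq_card, invNum_eq_card, hset, Finset.card_insert_of_notMem hP0.2]

lemma invNum_sAdj_mul_desc {n m : ℕ} {w : Equiv.Perm ℕ} (hw : IsPermOn n w)
    (hm : 1 ≤ m) (hmn : m + 1 ≤ n) (h : w⁻¹ (m+1) < w⁻¹ m) :
    invNum n w = invNum n (sAdj m * w) + 1 := by
  have hw' : IsPermOn n (sAdj m * w) := permOn_sAdj_mul hw hm hmn
  have hinv : (sAdj m * w)⁻¹ m < (sAdj m * w)⁻¹ (m+1) := by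
    have e : ∀ r, (sAdj m * w)⁻¹ r = w⁻¹ (sAdj m r) := by
      intro r
      simp [sAdj, mul_inv_rev, Equiv.swap_inv, Equiv.Perm.mul_apply]
    rw [e, e]
    simp only [sAdj, Equiv.swap_apply_left, Equiv.swap_apply_right]
    exact h
  have h2 := invNum_sAdj_mul_asc hw' hm hmn hinv
  have e3 : sAdj m * (sAdj m * w) = w := by
    rw [← mul_assoc, sAdj, Equiv.swap_mul_self, one_mul]
  rw [e3] at h2
  exact h2

/-- characterization of minimal coset representatives -/
lemma minReps_iff {n i : ℕ} {w : Equiv.Perm ℕ} (hw : IsPermOn n w) :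
    MinReps n {i} w ↔ ∀ j, 1 ≤ j → j ≤ n - 1 → j ≠ i → w⁻¹ j < w⁻¹ (j+1) := by
  constructor
  · intro hM j hj1 hj2 hji
    have hjn : j + 1 ≤ n := by omega
    have h := hM j hj1 hj2 (by simpa using hji)
    rcases lt_trichotomy (w⁻¹ j) (w⁻¹ (j+1)) with h1 | h1 | h1
    · exact h1
    · exact absurd (w⁻¹.injective h1) (by omega)
    · have := invNum_sAdj_mul_desc hw hj1 hjn h1
      omega
  · intro hC j hj1 hj2 hji
    rw [Set.mem_singleton_iff] at hji
    have hjn : j + 1 ≤ n := by omega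
    have := invNum_sAdj_mul_asc hw hj1 hjn (hC j hj1 hj2 hji)
    omega

open Finset Polynomial Equiv

def smalls (n i : ℕ) (w : Equiv.Perm ℕ) : Finset ℕ :=
  (Finset.Icc 1 n).filter (fun r => w r ∈ Finset.Icc 1 i)

lemma mem_smalls {n i : ℕ} {w : Equiv.Perm ℕ} {r : ℕ} :
    r ∈ smalls n i w ↔ (1 ≤ r ∧ r ≤ n) ∧ (1 ≤ w r ∧ w r ≤ i) := by
  simp [smalls, Finset.mem_filter, Finset.mem_Icc]

lemma card_smalls {n i : ℕ} {w : Equiv.Perm ℕ} (hw : IsPermOn n w) (hi : i ≤ n) :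
    (smalls n i w).card = i := by
  have : (smalls n i w).card = (Finset.Icc 1 i).card := by
    apply Finset.card_bij' (fun r _ => w r) (fun k _ => w⁻¹ k)
    · intro r hr
      rw [mem_smalls] at hr
      exact Finset.mem_Icc.mpr hr.2
    · intro k hk
      rw [Finset.mem_Icc] at hk
      have hkn : k ∈ Finset.Icc 1 n := Finset.mem_Icc.mpr ⟨hk.1, le_trans hk.2 hi⟩
      have := permOn_inv_mem hw hkn
      rw [mem_smalls]
      rw [Finset.mem_Icc] at this
      refine ⟨this, ?_⟩
      rw [Equiv.Perm.apply_inv_self]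
      exact hk
    · intro r _; exact w.inv_apply_self r
    · intro k _; exact w.apply_inv_self k
  rw [this, Nat.card_Icc]
  omega

lemma posLT_succ (n i : ℕ) (w : Equiv.Perm ℕ) (t : ℕ) :
    posLT n i (t+1) w = posLT n i t w + (if t ∈ smalls n i w then 1 else 0) := by
  classical
  unfold posLT
  have hsplit : (Finset.Icc 1 n).filter (fun r => r < t + 1 ∧ w r ∈ Finset.Icc 1 i)
      = ((Finset.Icc 1 n).filter (fun r => r < t ∧ w r ∈ Finset.Icc 1 i)) ∪
        ((Finset.Icc 1 n).filter (fun r => r = t ∧ w r ∈ Finset.Icc 1 i)) := by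
    ext r
    simp only [Finset.mem_filter, Finset.mem_union]
    constructor
    · rintro ⟨h1, h2, h3⟩
      rcases (by omega : r < t ∨ r = t) with h | h
      · exact Or.inl ⟨h1, h, h3⟩
      · exact Or.inr ⟨h1, h, h3⟩
    · rintro (⟨h1, h2, h3⟩ | ⟨h1, h2, h3⟩) <;> exact ⟨h1, by omega, h3⟩
  have hdisj : Disjoint ((Finset.Icc 1 n).filter (fun r => r < t ∧ w r ∈ Finset.Icc 1 i))
      ((Finset.Icc 1 n).filter (fun r => r = t ∧ w r ∈ Finset.Icc 1 i)) := by
    rw [Finset.disjoint_left]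
    intro r h1 h2
    rw [Finset.mem_filter] at h1 h2
    omega
  rw [hsplit, Finset.card_union_of_disjoint hdisj]
  congr 1
  by_cases h : t ∈ smalls n i w
  · rw [if_pos h]
    rw [mem_smalls] at h
    have : (Finset.Icc 1 n).filter (fun r => r = t ∧ w r ∈ Finset.Icc 1 i) = {t} := by
      ext r
      simp only [Finset.mem_filter, Finset.mem_singleton, Finset.mem_Icc]
      constructor
      · rintro ⟨-, h2, -⟩; exact h2
      · rintro rfl; exact ⟨h.1, rfl, h.2⟩
    rw [this, Finset.card_singleton]
  · rw [if_neg h]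
    rw [mem_smalls] at h
    have : (Finset.Icc 1 n).filter (fun r => r = t ∧ w r ∈ Finset.Icc 1 i) = ∅ := by
      ext r
      simp only [Finset.mem_filter, Finset.notMem_empty, iff_false, Finset.mem_Icc]
      rintro ⟨h1, rfl, h3⟩
      exact h ⟨h1, h3⟩
    rw [this, Finset.card_empty]

lemma posLT_le_one (n i : ℕ) (w : Equiv.Perm ℕ) {t : ℕ} (ht : t ≤ 1) : posLT n i t w = 0 := by
  unfold posLT
  rw [Finset.card_eq_zero]
  ext r
  simp only [Finset.mem_filter, Finset.notMem_empty, iff_false, Finset.mem_Icc]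
  rintro ⟨⟨h1, -⟩, h2, -⟩
  omega

lemma posLT_mono (n i : ℕ) (w : Equiv.Perm ℕ) {t t' : ℕ} (h : t ≤ t') :
    posLT n i t w ≤ posLT n i t' w := by
  unfold posLT
  apply Finset.card_le_card
  intro r hr
  rw [Finset.mem_filter] at hr ⊢
  exact ⟨hr.1, by omega, hr.2.2⟩

lemma posLT_big (n i : ℕ) (w : Equiv.Perm ℕ) {t : ℕ} (ht : n < t) :
    posLT n i t w = (smalls n i w).card := by
  unfold posLT smalls
  congr 1
  ext r
  simp only [Finset.mem_filter, Finset.mem_Icc]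
  constructor
  · rintro ⟨h1, -, h3⟩; exact ⟨h1, h3⟩
  · rintro ⟨h1, h3⟩; exact ⟨h1, by omega, h3⟩

lemma posLT_eq_of_agree {n i : ℕ} {w w' : Equiv.Perm ℕ} {t : ℕ}
    (h : ∀ r, r ∈ Finset.Icc 1 n → r < t → w r = w' r) :
    posLT n i t w = posLT n i t w' := by
  unfold posLT
  congr 1
  apply Finset.filter_congr
  intro r hr
  constructor
  · rintro ⟨h1, h2⟩; exact ⟨h1, by rw [← h r hr h1]; exact h2⟩
  · rintro ⟨h1, h2⟩; exact ⟨h1, by rw [h r hr h1]; exact h2⟩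

/-- values of `w * sAdj m` -/
lemma mul_sAdj_apply_left {m : ℕ} (w : Equiv.Perm ℕ) : (w * sAdj m) m = w (m+1) := by
  rw [Equiv.Perm.mul_apply, sAdj, Equiv.swap_apply_left]

lemma mul_sAdj_apply_right {m : ℕ} (w : Equiv.Perm ℕ) : (w * sAdj m) (m+1) = w m := by
  rw [Equiv.Perm.mul_apply, sAdj, Equiv.swap_apply_right]

lemma mul_sAdj_apply_other {m r : ℕ} (w : Equiv.Perm ℕ) (h1 : r ≠ m) (h2 : r ≠ m + 1) :
    (w * sAdj m) r = w r := by
  rw [Equiv.Perm.mul_apply, sAdj, Equiv.swap_apply_of_ne_of_ne h1 h2]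

lemma mem_smalls_mul_sAdj_other {n i m r : ℕ} {w : Equiv.Perm ℕ} (h1 : r ≠ m) (h2 : r ≠ m+1) :
    (r ∈ smalls n i (w * sAdj m)) ↔ r ∈ smalls n i w := by
  rw [mem_smalls, mem_smalls, mul_sAdj_apply_other w h1 h2]

lemma mem_smalls_mul_sAdj_left {n i m : ℕ} {w : Equiv.Perm ℕ} (hm : 1 ≤ m) (hmn : m+1 ≤ n) :
    (m ∈ smalls n i (w * sAdj m)) ↔ m+1 ∈ smalls n i w := by
  rw [mem_smalls, mem_smalls, mul_sAdj_apply_left w]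
  omega

lemma mem_smalls_mul_sAdj_right {n i m : ℕ} {w : Equiv.Perm ℕ} (hm : 1 ≤ m) (hmn : m+1 ≤ n) :
    (m+1 ∈ smalls n i (w * sAdj m)) ↔ m ∈ smalls n i w := by
  rw [mem_smalls, mem_smalls, mul_sAdj_apply_right w]
  omega

lemma posLT_mul_sAdj_le {n i m t : ℕ} {w : Equiv.Perm ℕ} (ht : t ≤ m) :
    posLT n i t (w * sAdj m) = posLT n i t w := by
  apply posLT_eq_of_agree
  intro r _ hr
  exact mul_sAdj_apply_other w (by omega) (by omega)

lemma posLT_mul_sAdj_ge {n i m t : ℕ} {w : Equiv.Perm ℕ} (hm : 1 ≤ m) (hmn : m + 1 ≤ n)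
    (ht : m + 2 ≤ t) : posLT n i t (w * sAdj m) = posLT n i t w := by
  unfold posLT
  apply Finset.card_bij' (fun r _ => sAdj m r) (fun r _ => sAdj m r)
  · intro r hr
    rw [Finset.mem_filter] at hr ⊢
    obtain ⟨hIcc, hlt, hsm⟩ := hr
    have h2 := sAdj_mem_Icc hm hmn hIcc
    refine ⟨h2, ?_, ?_⟩
    · rcases eq_or_ne r m with rfl | e1
      · rw [sAdj, Equiv.swap_apply_left]; omega
      · rcases eq_or_ne r (m+1) with rfl | e2
        · rw [sAdj, Equiv.swap_apply_right]; omega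
        · rw [sAdj, Equiv.swap_apply_of_ne_of_ne e1 e2]; omega
    · have : w (sAdj m r) = (w * sAdj m) r := (Equiv.Perm.mul_apply _ _ _).symm
      rw [this]; exact hsm
  · intro r hr
    rw [Finset.mem_filter] at hr ⊢
    obtain ⟨hIcc, hlt, hsm⟩ := hr
    have h2 := sAdj_mem_Icc hm hmn hIcc
    refine ⟨h2, ?_, ?_⟩
    · rcases eq_or_ne r m with rfl | e1
      · rw [sAdj, Equiv.swap_apply_left]; omega
      · rcases eq_or_ne r (m+1) with rfl | e2
        · rw [sAdj, Equiv.swap_apply_right]; omega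
        · rw [sAdj, Equiv.swap_apply_of_ne_of_ne e1 e2]; omega
    · have e : (w * sAdj m) (sAdj m r) = w (sAdj m (sAdj m r)) := Equiv.Perm.mul_apply _ _ _
      have e2 : sAdj m (sAdj m r) = r := by
        rw [sAdj, Equiv.swap_apply_self]
      rw [e, e2]; exact hsm
  · intro r _
    rw [sAdj, Equiv.swap_apply_self]
  · intro r _
    rw [sAdj, Equiv.swap_apply_self]

lemma posLT_mul_swap_le {n i x y t : ℕ} {a : Equiv.Perm ℕ} (ha : IsPermOn n a)
    (hx : 1 ≤ x) (hxy : x < y) (hyn : y ≤ n) (hv : a x < a y) :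
    posLT n i t (a * Equiv.swap x y) ≤ posLT n i t a := by
  classical
  set b := a * Equiv.swap x y with hb
  have hbx : b x = a y := by rw [hb, Equiv.Perm.mul_apply, Equiv.swap_apply_left]
  have hby : b y = a x := by rw [hb, Equiv.Perm.mul_apply, Equiv.swap_apply_right]
  have hbo : ∀ r, r ≠ x → r ≠ y → b r = a r := fun r h1 h2 => by
    rw [hb, Equiv.Perm.mul_apply, Equiv.swap_apply_of_ne_of_ne h1 h2]
  have hxI : x ∈ Finset.Icc 1 n := Finset.mem_Icc.mpr ⟨hx, by omega⟩
  have hyI : y ∈ Finset.Icc 1 n := Finset.mem_Icc.mpr ⟨by omega, hyn⟩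
  unfold posLT
  rw [Finset.card_filter, Finset.card_filter]
  have hyI' : y ∈ (Finset.Icc 1 n).erase x := Finset.mem_erase.mpr ⟨by omega, hyI⟩
  have expand : ∀ g : ℕ → ℕ, ∑ r ∈ Finset.Icc 1 n, g r
      = g x + (g y + ∑ r ∈ ((Finset.Icc 1 n).erase x).erase y, g r) := by
    intro g
    rw [Finset.add_sum_erase _ g hyI', Finset.add_sum_erase _ g hxI]
  rw [expand, expand]
  have hsame : ∑ r ∈ ((Finset.Icc 1 n).erase x).erase y,
      (if r < t ∧ b r ∈ Finset.Icc 1 i then 1 else 0)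
      = ∑ r ∈ ((Finset.Icc 1 n).erase x).erase y,
      (if r < t ∧ a r ∈ Finset.Icc 1 i then 1 else 0) := by
    apply Finset.sum_congr rfl
    intro r hr
    rw [Finset.mem_erase, Finset.mem_erase] at hr
    rw [hbo r hr.2.1 hr.1]
  rw [hsame]
  have hax := permOn_pos ha hxI
  have hay := permOn_pos ha hyI
  rw [hbx, hby]
  simp only [Finset.mem_Icc]
  split_ifs <;> omega

open Finset Polynomial Equiv

def Dom (n i : ℕ) (u v : Equiv.Perm ℕ) : Prop :=
  ∀ t, posLT n i t v ≤ posLT n i t u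

lemma bruhat_permOn {n : ℕ} {u v : Equiv.Perm ℕ} (hu : IsPermOn n u) (h : BruhatLE n u v) :
    IsPermOn n v := by
  induction h with
  | refl => exact hu
  | tail _ hbc ih =>
    obtain ⟨-, x, y, hx, hxy, hyn, rfl⟩ := hbc
    exact permOn_mul_swap ih (Finset.mem_Icc.mpr ⟨hx, by omega⟩)
      (Finset.mem_Icc.mpr ⟨by omega, hyn⟩)

lemma bruhat_invNum_le {n : ℕ} {u v : Equiv.Perm ℕ} (h : BruhatLE n u v) :
    invNum n u ≤ invNum n v := by
  induction h with
  | refl => exact le_rfl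
  | tail _ hbc ih =>
    obtain ⟨hlt, -⟩ := hbc
    omega

lemma bruhat_invNum_lt {n : ℕ} {u v : Equiv.Perm ℕ} (h : BruhatLE n u v) (hne : u ≠ v) :
    invNum n u < invNum n v := by
  rcases (Relation.ReflTransGen.cases_head h) with rfl | ⟨c, hc, hcv⟩
  · exact absurd rfl hne
  · obtain ⟨hlt, -⟩ := hc
    have := bruhat_invNum_le hcv
    omega

lemma dom_of_bruhat {n i : ℕ} {u v : Equiv.Perm ℕ} (hu : IsPermOn n u)
    (h : BruhatLE n u v) : Dom n i u v := by
  induction h with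
  | refl => exact fun t => le_rfl
  | tail hab hbc ih =>
    rename_i b c
    obtain ⟨hlt, x, y, hx, hxy, hyn, rfl⟩ := hbc
    intro t
    have hbOn : IsPermOn n b := bruhat_permOn hu hab
    have hv : b x < b y := apply_lt_of_invNum_lt hx hxy hyn hlt
    exact le_trans (posLT_mul_swap_le hbOn hx hxy hyn hv) (ih t)

/-- a strictly decreasing pair of values yields an adjacent descent -/
lemma exists_adj_desc {g : ℕ → ℕ} : ∀ {l k : ℕ}, k < l → g l < g k →
    ∃ m, k ≤ m ∧ m < l ∧ g (m+1) < g m := by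
  intro l
  induction l with
  | zero => omega
  | succ L ih =>
    intro k hkl h
    rcases eq_or_ne k L with rfl | hne
    · exact ⟨k, le_rfl, by omega, h⟩
    · by_cases h2 : g (L+1) < g L
      · exact ⟨L, by omega, by omega, h2⟩
      · have h3 : g L < g k := by omega
        obtain ⟨m, hm1, hm2, hm3⟩ := ih (by omega) h3
        exact ⟨m, hm1, by omega, hm3⟩

/-- within a class, a minimal representative is increasing (inverse version) -/
lemma ord_of_minReps {n i : ℕ} {w : Equiv.Perm ℕ} (hw : IsPermOn n w)
    (hM : MinReps n {i} w) {k l : ℕ} (hk : 1 ≤ k) (hkl : k < l) (hln : l ≤ n)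
    (hcl : l ≤ i ∨ i + 1 ≤ k) : w⁻¹ k < w⁻¹ l := by
  have hchar := (minReps_iff hw).mp hM
  by_contra hcon
  push_neg at hcon
  have hne : w⁻¹ l ≠ w⁻¹ k := fun h => (by omega : l ≠ k) (w⁻¹.injective h)
  have hlt : w⁻¹ l < w⁻¹ k := by omega
  obtain ⟨m, hm1, hm2, hm3⟩ := exists_adj_desc (g := fun j => w⁻¹ j) hkl hlt
  have : w⁻¹ m < w⁻¹ (m+1) := hchar m (by omega) (by omega) (by omega)
  omega

/-- a descent of a minimal representative must cross the value `i` -/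
lemma desc_cross {n i : ℕ} {w : Equiv.Perm ℕ} (hw : IsPermOn n w)
    (hM : MinReps n {i} w) {j : ℕ} (hj : 1 ≤ j) (hjn : j + 1 ≤ n)
    (hd : w (j+1) < w j) : w (j+1) ≤ i ∧ i < w j := by
  have h1 := permOn_pos hw (Finset.mem_Icc.mpr ⟨hj, by omega⟩)
  have h2 := permOn_pos hw (Finset.mem_Icc.mpr (⟨by omega, hjn⟩ : 1 ≤ j + 1 ∧ j + 1 ≤ n))
  by_contra hcon
  have hcl : w j ≤ i ∨ i + 1 ≤ w (j+1) := by omega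
  have := ord_of_minReps hw hM (k := w (j+1)) (l := w j) (by omega) hd (by omega)
    (by omega)
  rw [Equiv.Perm.inv_apply_self, Equiv.Perm.inv_apply_self] at this
  omega

/-- adjacent swap at a "mixed" position stays a minimal representative -/
lemma minReps_mul_sAdj {n i : ℕ} {w : Equiv.Perm ℕ} (hw : IsPermOn n w)
    (hM : MinReps n {i} w) {m : ℕ} (hm : 1 ≤ m) (hmn : m + 1 ≤ n)
    (hmix : (m ∈ smalls n i w) ↔ ¬ (m + 1 ∈ smalls n i w)) :
    MinReps n {i} (w * sAdj m) := by
  have hw' : IsPermOn n (w * sAdj m) :=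
    permOn_mul_swap hw (Finset.mem_Icc.mpr ⟨hm, by omega⟩)
      (Finset.mem_Icc.mpr ⟨by omega, hmn⟩)
  rw [minReps_iff hw']
  have hchar := (minReps_iff hw).mp hM
  intro k hk1 hk2 hki
  have hinv : ∀ r, (w * sAdj m)⁻¹ r = sAdj m (w⁻¹ r) := by
    intro r
    simp [sAdj, mul_inv_rev, Equiv.swap_inv, Equiv.Perm.mul_apply]
  rw [hinv, hinv]
  have hord : w⁻¹ k < w⁻¹ (k+1) := hchar k hk1 hk2 hki
  have hMm := permOn_pos hw (Finset.mem_Icc.mpr ⟨hm, by omega⟩)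
  have hMm1 := permOn_pos hw (Finset.mem_Icc.mpr (⟨by omega, hmn⟩ : 1 ≤ m+1 ∧ m+1 ≤ n))
  rw [sAdj]
  apply swap_adj_lt hord
  rintro ⟨h1, h2⟩
  -- then w m = k+1? no: w⁻¹ k = m, w⁻¹ (k+1) = m+1, i.e. w m = k, w (m+1) = k+1
  have e1 : w m = k := by rw [← h1, Equiv.Perm.apply_inv_self]
  have e2 : w (m+1) = k + 1 := by rw [← h2, Equiv.Perm.apply_inv_self]
  rw [mem_smalls, mem_smalls, e1, e2] at hmix
  omega

open Finset Polynomial Equiv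

lemma val_small {n i : ℕ} {w : Equiv.Perm ℕ} (hw : IsPermOn n w) (hM : MinReps n {i} w)
    (hin : i ≤ n) {r : ℕ} (hr : r ∈ smalls n i w) :
    w r = ((smalls n i w).filter (fun x => x ≤ r)).card := by
  have hrs := mem_smalls.mp hr
  have key : ((smalls n i w).filter (fun x => x ≤ r)).card = (Finset.Icc 1 (w r)).card := by
    apply Finset.card_bij' (fun x _ => w x) (fun k _ => w⁻¹ k)
    · intro x hx
      rw [Finset.mem_filter] at hx
      obtain ⟨hxs, hxr⟩ := hx
      have hxs' := mem_smalls.mp hxs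
      rw [Finset.mem_Icc]
      refine ⟨hxs'.2.1, ?_⟩
      rcases eq_or_ne x r with rfl | hne
      · exact le_rfl
      · by_contra hcon
        push_neg at hcon
        have h2 := ord_of_minReps hw hM (k := w r) (l := w x) hrs.2.1 hcon
          (le_trans hxs'.2.2 hin) (Or.inl hxs'.2.2)
        rw [Equiv.Perm.inv_apply_self, Equiv.Perm.inv_apply_self] at h2
        omega
    · intro k hk
      rw [Finset.mem_Icc] at hk
      have hki : k ≤ i := le_trans hk.2 hrs.2.2
      have hkn : k ∈ Finset.Icc 1 n := Finset.mem_Icc.mpr ⟨hk.1, le_trans hki hin⟩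
      have hinvk := permOn_inv_mem hw hkn
      rw [Finset.mem_filter]
      constructor
      · rw [mem_smalls, Finset.mem_Icc] at *
        refine ⟨⟨hinvk.1, hinvk.2⟩, ?_⟩
        rw [Equiv.Perm.apply_inv_self]
        exact ⟨hk.1, hki⟩
      · rcases eq_or_ne k (w r) with rfl | hne
        · rw [Equiv.Perm.inv_apply_self]
        · have h2 := ord_of_minReps hw hM (k := k) (l := w r) hk.1 (by omega)
            (le_trans hrs.2.2 hin) (Or.inl hrs.2.2)
          rw [Equiv.Perm.inv_apply_self] at h2
          omega
    · intro x _; exact w.inv_apply_self x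
    · intro k _; exact w.apply_inv_self k
  rw [key, Nat.card_Icc]
  omega

lemma val_large {n i : ℕ} {w : Equiv.Perm ℕ} (hw : IsPermOn n w) (hM : MinReps n {i} w)
    (hin : i ≤ n) {r : ℕ} (hrI : r ∈ Finset.Icc 1 n) (hr : i < w r) :
    w r = i + ((Finset.Icc 1 n).filter (fun x => i < w x ∧ x ≤ r)).card := by
  have hwr := permOn_pos hw hrI
  have key : ((Finset.Icc 1 n).filter (fun x => i < w x ∧ x ≤ r)).card
      = (Finset.Icc (i+1) (w r)).card := by
    apply Finset.card_bij' (fun x _ => w x) (fun k _ => w⁻¹ k)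
    · intro x hx
      rw [Finset.mem_filter] at hx
      obtain ⟨hxI, hxbig, hxr⟩ := hx
      have hx' := permOn_pos hw hxI
      rw [Finset.mem_Icc]
      refine ⟨by omega, ?_⟩
      rcases eq_or_ne x r with rfl | hne
      · exact le_rfl
      · by_contra hcon
        push_neg at hcon
        have h2 := ord_of_minReps hw hM (k := w r) (l := w x) (by omega) hcon
          hx'.2 (Or.inr (by omega))
        rw [Equiv.Perm.inv_apply_self, Equiv.Perm.inv_apply_self] at h2
        omega
    · intro k hk
      rw [Finset.mem_Icc] at hk
      have hkn : k ∈ Finset.Icc 1 n := Finset.mem_Icc.mpr ⟨by omega, le_trans hk.2 hwr.2⟩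
      have hinvk := permOn_inv_mem hw hkn
      rw [Finset.mem_filter]
      refine ⟨hinvk, by rw [Equiv.Perm.apply_inv_self]; omega, ?_⟩
      rcases eq_or_ne k (w r) with rfl | hne
      · rw [Equiv.Perm.inv_apply_self]
      · have h2 := ord_of_minReps hw hM (k := k) (l := w r) (by omega) (by omega)
          hwr.2 (Or.inr (by omega))
        rw [Equiv.Perm.inv_apply_self] at h2
        omega
    · intro x _; exact w.inv_apply_self x
    · intro k _; exact w.apply_inv_self k
  rw [key, Nat.card_Icc]
  omega

lemma eq_of_smalls_eq {n i : ℕ} {u v : Equiv.Perm ℕ} (hu : IsPermOn n u) (hv : IsPermOn n v)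
    (hMu : MinReps n {i} u) (hMv : MinReps n {i} v) (hin : i ≤ n)
    (h : smalls n i u = smalls n i v) : u = v := by
  apply Equiv.ext
  intro r
  by_cases hrI : r ∈ Finset.Icc 1 n
  · by_cases hrs : r ∈ smalls n i u
    · rw [val_small hu hMu hin hrs, val_small hv hMv hin (h ▸ hrs), h]
    · have hru := permOn_pos hu hrI
      have hrv := permOn_pos hv hrI
      have hbu : i < u r := by
        rcases Nat.lt_or_ge i (u r) with h' | h'
        · exact h'
        · exact absurd (mem_smalls.mpr ⟨Finset.mem_Icc.mp hrI, hru.1, h'⟩) hrs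
      have hrs' : r ∉ smalls n i v := h ▸ hrs
      have hbv : i < v r := by
        rcases Nat.lt_or_ge i (v r) with h' | h'
        · exact h'
        · exact absurd (mem_smalls.mpr ⟨Finset.mem_Icc.mp hrI, hrv.1, h'⟩) hrs'
      rw [val_large hu hMu hin hrI hbu, val_large hv hMv hin hrI hbv]
      congr 2
      apply Finset.filter_congr
      intro x hxI
      have hxu := permOn_pos hu hxI
      have hxv := permOn_pos hv hxI
      have hx : (x ∈ smalls n i u) ↔ x ∈ smalls n i v := by rw [h]
      rw [mem_smalls, mem_smalls] at hx
      have hxI' := Finset.mem_Icc.mp hxI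
      omega
  · rw [hu r hrI, hv r hrI]

open Finset Polynomial Equiv

lemma posLT_eq_of_no_smalls {n i : ℕ} {w : Equiv.Perm ℕ} {t1 : ℕ} : ∀ {t2 : ℕ}, t1 ≤ t2 →
    (∀ t, t1 ≤ t → t < t2 → t ∉ smalls n i w) → posLT n i t2 w = posLT n i t1 w := by
  intro t2
  induction t2 with
  | zero => intro h _; rw [Nat.le_zero.mp h]
  | succ s ih =>
    intro h hns
    rcases eq_or_ne t1 (s+1) with rfl | hne
    · rfl
    · have h1 : t1 ≤ s := by omega
      rw [posLT_succ, if_neg (hns s h1 (by omega)), add_zero]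
      exact ih h1 (fun t ht1 ht2 => hns t ht1 (by omega))

lemma eq_of_dom_zero {n i : ℕ} {u v : Equiv.Perm ℕ} (hu : IsPermOn n u) (hv : IsPermOn n v)
    (hMu : MinReps n {i} u) (hMv : MinReps n {i} v) (hin : i ≤ n)
    (hDom : Dom n i u v) (hz : ∀ t, t ∈ Finset.Icc 1 n → posLT n i (t+1) u = posLT n i (t+1) v) :
    u = v := by
  have hzero : ∀ t, posLT n i t u = posLT n i t v := by
    intro t
    rcases Nat.lt_or_ge t 2 with h | h
    · rw [posLT_le_one n i u (by omega), posLT_le_one n i v (by omega)]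
    · obtain ⟨s, rfl⟩ : ∃ s, t = s + 1 := ⟨t - 1, by omega⟩
      rcases le_or_gt s n with h2 | h2
      · exact hz s (Finset.mem_Icc.mpr ⟨by omega, h2⟩)
      · rw [posLT_big n i u (by omega), posLT_big n i v (by omega),
          card_smalls hu hin, card_smalls hv hin]
  apply eq_of_smalls_eq hu hv hMu hMv hin
  ext r
  have e1 := posLT_succ n i u r
  have e2 := posLT_succ n i v r
  rw [hzero r, hzero (r+1)] at e1
  by_cases h1 : r ∈ smalls n i u <;> by_cases h2 : r ∈ smalls n i v
  · simp [h1, h2]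
  · exfalso; rw [if_pos h1] at e1; rw [if_neg h2] at e2; omega
  · exfalso; rw [if_neg h1] at e1; rw [if_pos h2] at e2; omega
  · simp [h1, h2]

lemma bruhat_of_dom {n i : ℕ} {u v : Equiv.Perm ℕ} (hin : i ≤ n)
    (hu : IsPermOn n u) (hMu : MinReps n {i} u) (hv : IsPermOn n v) (hMv : MinReps n {i} v)
    (hDom : Dom n i u v) : BruhatLE n u v := by
  suffices H : ∀ K (u : Equiv.Perm ℕ), IsPermOn n u → MinReps n {i} u → Dom n i u v →
      (∑ t ∈ Finset.Icc 1 n, (posLT n i (t+1) u - posLT n i (t+1) v)) ≤ K →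
      BruhatLE n u v from H _ u hu hMu hDom le_rfl
  intro K
  induction K with
  | zero =>
    intro u hu hMu hDom hμ
    have hz : ∀ t, t ∈ Finset.Icc 1 n → posLT n i (t+1) u = posLT n i (t+1) v := by
      intro t ht
      have h0 : posLT n i (t+1) u - posLT n i (t+1) v
          ≤ ∑ t ∈ Finset.Icc 1 n, (posLT n i (t+1) u - posLT n i (t+1) v) :=
        Finset.single_le_sum (f := fun t => posLT n i (t+1) u - posLT n i (t+1) v)
          (fun _ _ => Nat.zero_le _) ht
      have h2 := hDom (t+1)
      omega
    rw [eq_of_dom_zero hu hv hMu hMv hin hDom hz]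
    exact Relation.ReflTransGen.refl
  | succ K ih =>
    intro u hu hMu hDom hμ
    by_cases hz : ∀ t, t ∈ Finset.Icc 1 n → posLT n i (t+1) u = posLT n i (t+1) v
    · rw [eq_of_dom_zero hu hv hMu hMv hin hDom hz]
      exact Relation.ReflTransGen.refl
    · push_neg at hz
      obtain ⟨j, hjI', hjd, hjmax⟩ : ∃ j, (1 ≤ j ∧ j ≤ n) ∧
          posLT n i (j+1) v < posLT n i (j+1) u ∧
          (∀ t, 1 ≤ t → t ≤ n → posLT n i (t+1) v < posLT n i (t+1) u → t ≤ j) := by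
        classical
        have hTne : ((Finset.Icc 1 n).filter
            (fun t => posLT n i (t+1) v < posLT n i (t+1) u)).Nonempty := by
          obtain ⟨t, ht, hne⟩ := hz
          refine ⟨t, ?_⟩
          rw [Finset.mem_filter]
          have := hDom (t+1)
          exact ⟨ht, by omega⟩
        have hjT := Finset.max'_mem _ hTne
        rw [Finset.mem_filter, Finset.mem_Icc] at hjT
        refine ⟨_, hjT.1, hjT.2, ?_⟩
        intro t h1 h2 h3
        exact Finset.le_max' _ t (by rw [Finset.mem_filter, Finset.mem_Icc]; exact ⟨⟨h1, h2⟩, h3⟩)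
      have hjn : j + 1 ≤ n := by
        rcases eq_or_ne j n with heq | hne
        · exfalso
          have b1 : posLT n i (j+1) u = (smalls n i u).card := posLT_big n i u (by omega)
          have b2 : posLT n i (j+1) v = (smalls n i v).card := posLT_big n i v (by omega)
          rw [b1, b2, card_smalls hu hin, card_smalls hv hin] at hjd
          omega
        · omega
      have hd1 : posLT n i (j+2) u = posLT n i (j+2) v := by
        have h2 := hDom (j+2)
        by_contra hne
        have := hjmax (j+1) (by omega) hjn
          (show posLT n i (j+2) v < posLT n i (j+2) u by omega)
        omega
      have e1u : posLT n i (j+2) u = posLT n i (j+1) u + (if j+1 ∈ smalls n i u then 1 else 0) :=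
        posLT_succ n i u (j+1)
      have e1v : posLT n i (j+2) v = posLT n i (j+1) v + (if j+1 ∈ smalls n i v then 1 else 0) :=
        posLT_succ n i v (j+1)
      have hj1u : (j+1) ∉ smalls n i u := by
        intro hc
        rw [if_pos hc] at e1u
        split_ifs at e1v <;> omega
      obtain ⟨m, hm1, hmj, hmsm, hmmax⟩ : ∃ m, 1 ≤ m ∧ m ≤ j ∧ m ∈ smalls n i u ∧
          (∀ t, 1 ≤ t → t ≤ j → t ∈ smalls n i u → t ≤ m) := by
        classical
        have hSne : ((Finset.Icc 1 j).filter (fun x => x ∈ smalls n i u)).Nonempty := by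
          have hcard : 0 < ((Finset.Icc 1 n).filter
              (fun r => r < j+1 ∧ u r ∈ Finset.Icc 1 i)).card := by
            have h0 : 0 < posLT n i (j+1) u := by omega
            exact h0
          obtain ⟨x, hx⟩ := Finset.card_pos.mp hcard
          rw [Finset.mem_filter] at hx
          obtain ⟨hx1, hx2, hx3⟩ := hx
          rw [Finset.mem_Icc] at hx1
          refine ⟨x, ?_⟩
          rw [Finset.mem_filter, Finset.mem_Icc, mem_smalls]
          exact ⟨⟨hx1.1, by omega⟩, ⟨hx1.1, hx1.2⟩, Finset.mem_Icc.mp hx3⟩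
        have hmS := Finset.max'_mem _ hSne
        rw [Finset.mem_filter, Finset.mem_Icc] at hmS
        refine ⟨_, hmS.1.1, hmS.1.2, hmS.2, ?_⟩
        intro t h1 h2 h3
        exact Finset.le_max' _ t (by rw [Finset.mem_filter, Finset.mem_Icc]; exact ⟨⟨h1, h2⟩, h3⟩)
      have hmn : m + 1 ≤ n := by omega
      have hm1sm : (m+1) ∉ smalls n i u := by
        rcases eq_or_ne m j with heq | hne
        · rw [heq]; exact hj1u
        · intro hc
          have := hmmax (m+1) (by omega) (by omega) hc
          omega
      have hconst : posLT n i (j+1) u = posLT n i (m+1) u := by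
        apply posLT_eq_of_no_smalls (by omega)
        intro t ht1 ht2 hc
        have hsm := mem_smalls.mp hc
        have := hmmax t (by omega) (by omega) hc
        omega
      have hgap : posLT n i (m+1) v + 1 ≤ posLT n i (m+1) u := by
        have := posLT_mono n i v (show m+1 ≤ j+1 by omega)
        omega
      have humem := mem_smalls.mp hmsm
      have hum1 := permOn_pos hu (Finset.mem_Icc.mpr (⟨by omega, hmn⟩ : 1 ≤ m+1 ∧ m+1 ≤ n))
      have hum1big : i < u (m+1) := by
        rcases Nat.lt_or_ge i (u (m+1)) with h' | h'
        · exact h'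
        · exact absurd (mem_smalls.mpr ⟨⟨by omega, hmn⟩, by omega, h'⟩) hm1sm
      have hulm : u m < u (m+1) := by omega
      have hu'On : IsPermOn n (u * sAdj m) :=
        permOn_mul_swap hu (Finset.mem_Icc.mpr ⟨hm1, by omega⟩)
          (Finset.mem_Icc.mpr ⟨by omega, hmn⟩)
      have hu'M : MinReps n {i} (u * sAdj m) := by
        apply minReps_mul_sAdj hu hMu hm1 hmn
        constructor
        · intro _; exact hm1sm
        · intro _; exact hmsm
      have hstep : invNum n u < invNum n (u * sAdj m) := by
        have : u * sAdj m = u * Equiv.swap m (m+1) := rfl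
        rw [this]
        exact invNum_lt_mul_swap hm1 (by omega) hmn hulm
      have hp1 : ∀ t, t ≠ m + 1 → posLT n i t (u * sAdj m) = posLT n i t u := by
        intro t ht
        rcases le_or_gt t m with h' | h'
        · exact posLT_mul_sAdj_le h'
        · exact posLT_mul_sAdj_ge hm1 hmn (by omega)
      have hp2 : posLT n i (m+1) (u * sAdj m) + 1 = posLT n i (m+1) u := by
        have e1 : posLT n i (m+1) (u * sAdj m)
            = posLT n i m (u * sAdj m) + (if m ∈ smalls n i (u * sAdj m) then 1 else 0) :=
          posLT_succ n i (u * sAdj m) m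
        have e2 : posLT n i (m+1) u = posLT n i m u + (if m ∈ smalls n i u then 1 else 0) :=
          posLT_succ n i u m
        rw [if_neg (by rw [mem_smalls_mul_sAdj_left hm1 hmn]; exact hm1sm), add_zero] at e1
        rw [if_pos hmsm] at e2
        have e3 : posLT n i m (u * sAdj m) = posLT n i m u := posLT_mul_sAdj_le le_rfl
        omega
      have hDom' : Dom n i (u * sAdj m) v := by
        intro t
        rcases eq_or_ne t (m+1) with rfl | hne
        · omega
        · rw [hp1 t hne]; exact hDom t
      have hμ' : (∑ t ∈ Finset.Icc 1 n, (posLT n i (t+1) (u * sAdj m) - posLT n i (t+1) v)) ≤ K := by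
        have hmI : m ∈ Finset.Icc 1 n := Finset.mem_Icc.mpr ⟨hm1, by omega⟩
        have e1 : (posLT n i (m+1) (u * sAdj m) - posLT n i (m+1) v)
            + ∑ t ∈ (Finset.Icc 1 n).erase m, (posLT n i (t+1) (u * sAdj m) - posLT n i (t+1) v)
            = ∑ t ∈ Finset.Icc 1 n, (posLT n i (t+1) (u * sAdj m) - posLT n i (t+1) v) :=
          Finset.add_sum_erase _ (fun t => posLT n i (t+1) (u * sAdj m) - posLT n i (t+1) v) hmI
        have e2 : (posLT n i (m+1) u - posLT n i (m+1) v)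
            + ∑ t ∈ (Finset.Icc 1 n).erase m, (posLT n i (t+1) u - posLT n i (t+1) v)
            = ∑ t ∈ Finset.Icc 1 n, (posLT n i (t+1) u - posLT n i (t+1) v) :=
          Finset.add_sum_erase _ (fun t => posLT n i (t+1) u - posLT n i (t+1) v) hmI
        have e3 : ∑ t ∈ (Finset.Icc 1 n).erase m, (posLT n i (t+1) (u * sAdj m) - posLT n i (t+1) v)
            = ∑ t ∈ (Finset.Icc 1 n).erase m, (posLT n i (t+1) u - posLT n i (t+1) v) := by
          apply Finset.sum_congr rfl
          intro t ht
          rw [Finset.mem_erase] at ht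
          rw [hp1 (t+1) (by omega)]
        rw [e3] at e1
        omega
      exact Relation.ReflTransGen.head
        ⟨hstep, m, m+1, hm1, by omega, hmn, rfl⟩
        (ih (u * sAdj m) hu'On hu'M hDom' hμ')

open Finset Polynomial Equiv

noncomputable def Phi (n i : ℕ) (u v : Equiv.Perm ℕ) : Polynomial ℤ :=
  (-1) ^ (invNum n v - invNum n u) *
    ∏ j ∈ smalls n i v \ smalls n i u, (1 - X ^ (posLT n i j u - posLT n i j v))

lemma Phi_self (n i : ℕ) (u : Equiv.Perm ℕ) : Phi n i u u = 1 := by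
  unfold Phi
  rw [Finset.sdiff_self, Finset.prod_empty, Nat.sub_self, pow_zero, mul_one]

lemma posLT_mul_sAdj_ne {n i j t : ℕ} (hj : 1 ≤ j) (hjn : j + 1 ≤ n) (w : Equiv.Perm ℕ)
    (ht : t ≠ j + 1) : posLT n i t (w * sAdj j) = posLT n i t w := by
  rcases le_or_gt t j with h | h
  · exact posLT_mul_sAdj_le h
  · exact posLT_mul_sAdj_ge hj hjn (by omega)

lemma posLT_mul_sAdj_succ {n i j : ℕ} (hj : 1 ≤ j) (hjn : j + 1 ≤ n) (w : Equiv.Perm ℕ) :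
    posLT n i (j+1) (w * sAdj j)
      = posLT n i j w + (if (j+1) ∈ smalls n i w then 1 else 0) := by
  have e1 : posLT n i (j+1) (w * sAdj j)
      = posLT n i j (w * sAdj j) + (if j ∈ smalls n i (w * sAdj j) then 1 else 0) :=
    posLT_succ n i (w * sAdj j) j
  rw [posLT_mul_sAdj_le le_rfl] at e1
  rw [e1]
  congr 1
  exact if_congr (mem_smalls_mul_sAdj_left hj hjn) rfl rfl

open Finset Polynomial Equiv

set_option maxHeartbeats 1000000 in
lemma main_induction {n i : ℕ} (hi1 : 1 ≤ i) (hi2 : i ≤ n - 1)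
    (R : Equiv.Perm ℕ → Equiv.Perm ℕ → Polynomial ℤ) (hR : IsRFamilyQ n {i} R) :
    ∀ N v, invNum n v ≤ N → IsPermOn n v → MinReps n {i} v →
      ∀ u, IsPermOn n u → MinReps n {i} u → Dom n i u v → R u v = Phi n i u v := by
  have hn2 : 2 ≤ n := by omega
  have hin : i ≤ n := by omega
  intro N
  induction N with
  | zero =>
    intro v hN hv hMv u hu hMu hDom
    have hB := bruhat_of_dom hin hu hMu hv hMv hDom
    rcases eq_or_ne u v with rfl | hne
    · rw [hR.2.1 u hMu, Phi_self]
    · have := bruhat_invNum_lt hB hne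
      omega
  | succ N ih =>
    intro v hN hv hMv u hu hMu hDom
    have hB := bruhat_of_dom hin hu hMu hv hMv hDom
    rcases eq_or_ne u v with rfl | hne
    · rw [hR.2.1 u hMu, Phi_self]
    have hlt := bruhat_invNum_lt hB hne
    -- find a descent of v
    obtain ⟨j, hj1, hjn1, hdesc⟩ : ∃ j, 1 ≤ j ∧ j + 1 ≤ n ∧ v (j+1) < v j := by
      have hpos : 0 < invNum n v := by omega
      rw [invNum_eq_card, Finset.card_pos] at hpos
      obtain ⟨⟨p, q⟩, hpq⟩ := hpos
      rw [mem_Invs] at hpq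
      dsimp only at hpq
      obtain ⟨⟨⟨hp1, hp2⟩, hq1, hq2⟩, hplq, hinv⟩ := hpq
      obtain ⟨m, hm1, hm2, hm3⟩ := exists_adj_desc (g := fun r => v r) hplq hinv
      exact ⟨m, by omega, by omega, hm3⟩
    have hjn : j ≤ n - 1 := by omega
    -- classify v at j
    have hvcross := desc_cross hv hMv hj1 hjn1 hdesc
    have hvpos1 := permOn_pos hv (Finset.mem_Icc.mpr ⟨hj1, by omega⟩)
    have hvpos2 := permOn_pos hv (Finset.mem_Icc.mpr (⟨by omega, hjn1⟩ : 1 ≤ j+1 ∧ j+1 ≤ n))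
    have hvj : j ∉ smalls n i v := by rw [mem_smalls]; omega
    have hvj1 : (j+1) ∈ smalls n i v := by rw [mem_smalls]; omega
    -- facts about v * sAdj j
    have hvsOn : IsPermOn n (v * sAdj j) :=
      permOn_mul_swap hv (Finset.mem_Icc.mpr ⟨hj1, by omega⟩)
        (Finset.mem_Icc.mpr ⟨by omega, hjn1⟩)
    have hvsM : MinReps n {i} (v * sAdj j) :=
      minReps_mul_sAdj hv hMv hj1 hjn1 (iff_of_false hvj (not_not_intro hvj1))
    have hivs : invNum n v = invNum n (v * sAdj j) + 1 := invNum_mul_sAdj_desc hj1 hjn1 hdesc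
    have hpvs : ∀ t, t ≠ j + 1 → posLT n i t (v * sAdj j) = posLT n i t v :=
      fun t ht => posLT_mul_sAdj_ne hj1 hjn1 v ht
    have e_v : posLT n i (j+1) v = posLT n i j v := by
      have e := posLT_succ n i v j
      rw [if_neg hvj, add_zero] at e
      exact e
    have e_vs : posLT n i (j+1) (v * sAdj j) = posLT n i j v + 1 := by
      rw [posLT_mul_sAdj_succ hj1 hjn1, if_pos hvj1]
    have hDj := hDom j
    have hDj1 := hDom (j+1)
    have hTri := hR.2.2 u v hMu hMv hB hne j hj1 hjn hdesc
    by_cases hud : u (j+1) < u j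
    · -- Branch A : j is also a descent of u
      have hucross := desc_cross hu hMu hj1 hjn1 hud
      have hupos1 := permOn_pos hu (Finset.mem_Icc.mpr ⟨hj1, by omega⟩)
      have hupos2 := permOn_pos hu (Finset.mem_Icc.mpr (⟨by omega, hjn1⟩ : 1 ≤ j+1 ∧ j+1 ≤ n))
      have huj : j ∉ smalls n i u := by rw [mem_smalls]; omega
      have huj1 : (j+1) ∈ smalls n i u := by rw [mem_smalls]; omega
      have husOn : IsPermOn n (u * sAdj j) :=
        permOn_mul_swap hu (Finset.mem_Icc.mpr ⟨hj1, by omega⟩)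
          (Finset.mem_Icc.mpr ⟨by omega, hjn1⟩)
      have husM : MinReps n {i} (u * sAdj j) :=
        minReps_mul_sAdj hu hMu hj1 hjn1 (iff_of_false huj (not_not_intro huj1))
      have hius : invNum n u = invNum n (u * sAdj j) + 1 := invNum_mul_sAdj_desc hj1 hjn1 hud
      have hpus : ∀ t, t ≠ j + 1 → posLT n i t (u * sAdj j) = posLT n i t u :=
        fun t ht => posLT_mul_sAdj_ne hj1 hjn1 u ht
      have e_u : posLT n i (j+1) u = posLT n i j u := by
        have e := posLT_succ n i u j
        rw [if_neg huj, add_zero] at e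
        exact e
      have e_us : posLT n i (j+1) (u * sAdj j) = posLT n i j u + 1 := by
        rw [posLT_mul_sAdj_succ hj1 hjn1, if_pos huj1]
      have hDomA : Dom n i (u * sAdj j) (v * sAdj j) := by
        intro t
        rcases eq_or_ne t (j+1) with rfl | hne'
        · rw [e_us, e_vs]; omega
        · rw [hpus t hne', hpvs t hne']; exact hDom t
      have hIH := ih (v * sAdj j) (by omega) hvsOn hvsM (u * sAdj j) husOn husM hDomA
      rw [hTri.1 hud, hIH]
      unfold Phi
      have hDset : smalls n i (v * sAdj j) \ smalls n i (u * sAdj j)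
          = smalls n i v \ smalls n i u := by
        ext r
        rw [Finset.mem_sdiff, Finset.mem_sdiff]
        rcases eq_or_ne r j with rfl | hr1
        · rw [mem_smalls_mul_sAdj_left hj1 hjn1, mem_smalls_mul_sAdj_left hj1 hjn1]
          constructor
          · rintro ⟨-, h2⟩; exact absurd huj1 h2
          · rintro ⟨h1, -⟩; exact absurd h1 hvj
        · rcases eq_or_ne r (j+1) with rfl | hr2
          · rw [mem_smalls_mul_sAdj_right hj1 hjn1, mem_smalls_mul_sAdj_right hj1 hjn1]
            constructor
            · rintro ⟨h1, -⟩; exact absurd h1 hvj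
            · rintro ⟨-, h2⟩; exact absurd huj1 h2
          · rw [mem_smalls_mul_sAdj_other hr1 hr2, mem_smalls_mul_sAdj_other hr1 hr2]
      rw [hDset]
      have hsign : invNum n (v * sAdj j) - invNum n (u * sAdj j)
          = invNum n v - invNum n u := by omega
      rw [hsign]
      congr 1
      apply Finset.prod_congr rfl
      intro r hr
      rw [Finset.mem_sdiff] at hr
      have hr2 : r ≠ j + 1 := fun h => hr.2 (h ▸ huj1)
      rw [hpus r hr2, hpvs r hr2]
    · by_cases hus : MinReps n {i} (u * sAdj j)
      · -- Branch B : j mixed for u (j small, j+1 large)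
        have husOn : IsPermOn n (u * sAdj j) :=
          permOn_mul_swap hu (Finset.mem_Icc.mpr ⟨hj1, by omega⟩)
            (Finset.mem_Icc.mpr ⟨by omega, hjn1⟩)
        have hudne : u j ≠ u (j+1) := fun h => (by omega : j ≠ j+1) (u.injective h)
        have husdesc : (u * sAdj j) (j+1) < (u * sAdj j) j := by
          rw [mul_sAdj_apply_left, mul_sAdj_apply_right]
          omega
        have hcross := desc_cross husOn hus hj1 hjn1 husdesc
        rw [mul_sAdj_apply_left, mul_sAdj_apply_right] at hcross
        have hupos1 := permOn_pos hu (Finset.mem_Icc.mpr ⟨hj1, by omega⟩)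
        have hupos2 := permOn_pos hu (Finset.mem_Icc.mpr (⟨by omega, hjn1⟩ : 1 ≤ j+1 ∧ j+1 ≤ n))
        have huj : j ∈ smalls n i u := by rw [mem_smalls]; omega
        have huj1 : (j+1) ∉ smalls n i u := by rw [mem_smalls]; omega
        have hpus : ∀ t, t ≠ j + 1 → posLT n i t (u * sAdj j) = posLT n i t u :=
          fun t ht => posLT_mul_sAdj_ne hj1 hjn1 u ht
        have e_u : posLT n i (j+1) u = posLT n i j u + 1 := by
          have e := posLT_succ n i u j
          rw [if_pos huj] at e
          exact e
        have e_us : posLT n i (j+1) (u * sAdj j) = posLT n i j u := by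
          rw [posLT_mul_sAdj_succ hj1 hjn1, if_neg huj1, add_zero]
        have hinv_us : invNum n (u * sAdj j) = invNum n u + 1 :=
          invNum_mul_sAdj_asc hj1 hjn1 (by omega : u j < u (j+1))
        have hDomuvs : Dom n i u (v * sAdj j) := by
          intro t
          rcases eq_or_ne t (j+1) with rfl | hne'
          · rw [e_vs, e_u]; omega
          · rw [hpvs t hne']; exact hDom t
        have hRuvs : R u (v * sAdj j) = Phi n i u (v * sAdj j) :=
          ih (v * sAdj j) (by omega) hvsOn hvsM u hu hMu hDomuvs
        have hjD : (j+1) ∈ smalls n i v \ smalls n i u := Finset.mem_sdiff.mpr ⟨hvj1, huj1⟩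
        have hjD' : j ∉ (smalls n i v \ smalls n i u).erase (j+1) := by
          intro h
          rw [Finset.mem_erase, Finset.mem_sdiff] at h
          exact h.2.2 huj
        have hD1 : smalls n i (v * sAdj j) \ smalls n i u
            = (smalls n i v \ smalls n i u).erase (j+1) := by
          ext r
          rw [Finset.mem_erase, Finset.mem_sdiff, Finset.mem_sdiff]
          rcases eq_or_ne r j with rfl | hr1
          · rw [mem_smalls_mul_sAdj_left hj1 hjn1]
            constructor
            · rintro ⟨-, h2⟩; exact absurd huj h2
            · rintro ⟨-, -, h2⟩; exact absurd huj h2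
          · rcases eq_or_ne r (j+1) with rfl | hr2
            · rw [mem_smalls_mul_sAdj_right hj1 hjn1]
              constructor
              · rintro ⟨hh, -⟩; exact absurd hh hvj
              · rintro ⟨hh, -⟩; exact absurd rfl hh
            · rw [mem_smalls_mul_sAdj_other hr1 hr2]
              constructor
              · rintro ⟨ha', hb'⟩; exact ⟨hr2, ha', hb'⟩
              · rintro ⟨-, ha', hb'⟩; exact ⟨ha', hb'⟩
        have hPhi_u_vs : Phi n i u (v * sAdj j)
            = (-1) ^ (invNum n v - invNum n u - 1)
              * ∏ r ∈ (smalls n i v \ smalls n i u).erase (j+1),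
                  (1 - X ^ (posLT n i r u - posLT n i r v)) := by
          unfold Phi
          rw [hD1]
          have hsg : invNum n (v * sAdj j) - invNum n u = invNum n v - invNum n u - 1 := by
            omega
          rw [hsg]
          congr 1
          apply Finset.prod_congr rfl
          intro r hr
          rw [Finset.mem_erase] at hr
          rw [hpvs r hr.1]
        have hPhi_uv : Phi n i u v
            = (-1) ^ (invNum n v - invNum n u)
              * ((1 - X ^ (posLT n i j u - posLT n i j v + 1))
                * ∏ r ∈ (smalls n i v \ smalls n i u).erase (j+1),
                    (1 - X ^ (posLT n i r u - posLT n i r v))) := by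
          unfold Phi
          rw [← Finset.mul_prod_erase _ _ hjD]
          have hexp : posLT n i (j+1) u - posLT n i (j+1) v
              = posLT n i j u - posLT n i j v + 1 := by omega
          rw [hexp]
        by_cases hmpos : posLT n i j v < posLT n i j u
        · have hDomB : Dom n i (u * sAdj j) (v * sAdj j) := by
            intro t
            rcases eq_or_ne t (j+1) with rfl | hne'
            · rw [e_us, e_vs]; omega
            · rw [hpus t hne', hpvs t hne']; exact hDom t
          have hle2 : invNum n (u * sAdj j) ≤ invNum n (v * sAdj j) :=
            bruhat_invNum_le (bruhat_of_dom hin husOn hus hvsOn hvsM hDomB)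
          have hRusvs : R (u * sAdj j) (v * sAdj j) = Phi n i (u * sAdj j) (v * sAdj j) :=
            ih (v * sAdj j) (by omega) hvsOn hvsM (u * sAdj j) husOn hus hDomB
          have hD2 : smalls n i (v * sAdj j) \ smalls n i (u * sAdj j)
              = insert j ((smalls n i v \ smalls n i u).erase (j+1)) := by
            ext r
            rw [Finset.mem_insert, Finset.mem_erase, Finset.mem_sdiff, Finset.mem_sdiff]
            rcases eq_or_ne r j with rfl | hr1
            · rw [mem_smalls_mul_sAdj_left hj1 hjn1, mem_smalls_mul_sAdj_left hj1 hjn1]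
              constructor
              · intro _; exact Or.inl rfl
              · intro _; exact ⟨hvj1, huj1⟩
            · rcases eq_or_ne r (j+1) with rfl | hr2
              · rw [mem_smalls_mul_sAdj_right hj1 hjn1, mem_smalls_mul_sAdj_right hj1 hjn1]
                constructor
                · rintro ⟨hh, -⟩; exact absurd hh hvj
                · rintro (h | ⟨hh, -⟩)
                  · exact absurd h (by omega)
                  · exact absurd rfl hh
              · rw [mem_smalls_mul_sAdj_other hr1 hr2, mem_smalls_mul_sAdj_other hr1 hr2]
                constructor
                · rintro ⟨ha', hb'⟩; exact Or.inr ⟨hr2, ha', hb'⟩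
                · rintro (h | ⟨-, ha', hb'⟩)
                  · exact absurd h hr1
                  · exact ⟨ha', hb'⟩
          have hPhi_usvs : Phi n i (u * sAdj j) (v * sAdj j)
              = (-1) ^ (invNum n v - invNum n u - 2)
                * ((1 - X ^ (posLT n i j u - posLT n i j v))
                  * ∏ r ∈ (smalls n i v \ smalls n i u).erase (j+1),
                      (1 - X ^ (posLT n i r u - posLT n i r v))) := by
            unfold Phi
            rw [hD2, Finset.prod_insert hjD']
            have hsg : invNum n (v * sAdj j) - invNum n (u * sAdj j)
                = invNum n v - invNum n u - 2 := by omega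
            rw [hsg]
            have hej : posLT n i j (u * sAdj j) = posLT n i j u := posLT_mul_sAdj_le le_rfl
            have hej2 : posLT n i j (v * sAdj j) = posLT n i j v := posLT_mul_sAdj_le le_rfl
            rw [hej, hej2]
            congr 2
            apply Finset.prod_congr rfl
            intro r hr
            rw [Finset.mem_erase] at hr
            rw [hpus r hr.1, hpvs r hr.1]
          rw [hTri.2.1 hud hus, hRusvs, hRuvs, hPhi_usvs, hPhi_u_vs, hPhi_uv]
          obtain ⟨k, hk⟩ : ∃ k, invNum n v - invNum n u = k + 2 := ⟨_, (by omega :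
            invNum n v - invNum n u = (invNum n v - invNum n u - 2) + 2)⟩
          rw [hk]
          have h1' : k + 2 - 1 = k + 1 := by omega
          have h2' : k + 2 - 2 = k := by omega
          rw [h1', h2']
          ring
        · -- degenerate subcase : counts agree at j
          have hndom : ¬ Dom n i (u * sAdj j) (v * sAdj j) := by
            intro hD'
            have := hD' (j+1)
            rw [e_us, e_vs] at this
            omega
          have hnb : ¬ BruhatLE n (u * sAdj j) (v * sAdj j) :=
            fun hB' => hndom (dom_of_bruhat husOn hB')
          have hR0 : R (u * sAdj j) (v * sAdj j) = 0 := hR.1 _ _ hus hvsM hnb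
          rw [hTri.2.1 hud hus, hR0, hRuvs, hPhi_u_vs, hPhi_uv]
          have hm0 : posLT n i j u - posLT n i j v = 0 := by omega
          rw [hm0]
          obtain ⟨k, hk⟩ : ∃ k, invNum n v - invNum n u = k + 1 := ⟨_, (by omega :
            invNum n v - invNum n u = (invNum n v - invNum n u - 1) + 1)⟩
          rw [hk]
          have h1' : k + 1 - 1 = k := by omega
          rw [h1']
          ring
      · -- Branch C : u s_j is not a minimal representative
        have hupos1 := permOn_pos hu (Finset.mem_Icc.mpr ⟨hj1, by omega⟩)
        have hupos2 := permOn_pos hu (Finset.mem_Icc.mpr (⟨by omega, hjn1⟩ : 1 ≤ j+1 ∧ j+1 ≤ n))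
        by_cases h1 : j ∈ smalls n i u
        · by_cases h2 : (j+1) ∈ smalls n i u
          · -- both small
            have e_u : posLT n i (j+1) u = posLT n i j u + 1 := by
              have e := posLT_succ n i u j
              rw [if_pos h1] at e
              exact e
            have hDomuvs : Dom n i u (v * sAdj j) := by
              intro t
              rcases eq_or_ne t (j+1) with rfl | hne'
              · rw [e_vs, e_u]; omega
              · rw [hpvs t hne']; exact hDom t
            have hRuvs : R u (v * sAdj j) = Phi n i u (v * sAdj j) :=
              ih (v * sAdj j) (by omega) hvsOn hvsM u hu hMu hDomuvs
            have hDset : smalls n i (v * sAdj j) \ smalls n i u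
                = smalls n i v \ smalls n i u := by
              ext r
              rw [Finset.mem_sdiff, Finset.mem_sdiff]
              rcases eq_or_ne r j with rfl | hr1
              · rw [mem_smalls_mul_sAdj_left hj1 hjn1]
                constructor
                · rintro ⟨-, hh⟩; exact absurd h1 hh
                · rintro ⟨hh, -⟩; exact absurd hh hvj
              · rcases eq_or_ne r (j+1) with rfl | hr2
                · rw [mem_smalls_mul_sAdj_right hj1 hjn1]
                  constructor
                  · rintro ⟨hh, -⟩; exact absurd hh hvj
                  · rintro ⟨-, hh⟩; exact absurd h2 hh
                · rw [mem_smalls_mul_sAdj_other hr1 hr2]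
            have hPhi_u_vs : Phi n i u (v * sAdj j)
                = (-1) ^ (invNum n v - invNum n u - 1)
                  * ∏ r ∈ smalls n i v \ smalls n i u,
                      (1 - X ^ (posLT n i r u - posLT n i r v)) := by
              unfold Phi
              rw [hDset]
              have hsg : invNum n (v * sAdj j) - invNum n u
                  = invNum n v - invNum n u - 1 := by omega
              rw [hsg]
              congr 1
              apply Finset.prod_congr rfl
              intro r hr
              rw [Finset.mem_sdiff] at hr
              have hr2 : r ≠ j + 1 := fun h => hr.2 (h ▸ h2)
              rw [hpvs r hr2]
            rw [hTri.2.2 hud hus, hRuvs, hPhi_u_vs]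
            unfold Phi
            obtain ⟨k, hk⟩ : ∃ k, invNum n v - invNum n u = k + 1 := ⟨_, (by omega :
              invNum n v - invNum n u = (invNum n v - invNum n u - 1) + 1)⟩
            rw [hk]
            have h1' : k + 1 - 1 = k := by omega
            rw [h1']
            ring
          · -- mixed (j small, j+1 large) : contradiction with ¬ MinReps (u s_j)
            exact absurd (minReps_mul_sAdj hu hMu hj1 hjn1 (iff_of_true h1 h2)) hus
        · by_cases h2 : (j+1) ∈ smalls n i u
          · -- mixed other way : then u has a descent at j, contradiction with hud
            exfalso
            have hx1 : i < u j := by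
              rcases Nat.lt_or_ge i (u j) with h | h
              · exact h
              · exact absurd (mem_smalls.mpr ⟨⟨hj1, by omega⟩, by omega, h⟩) h1
            have hx2 := (mem_smalls.mp h2).2.2
            omega
          · -- both large
            have e_u : posLT n i (j+1) u = posLT n i j u := by
              have e := posLT_succ n i u j
              rw [if_neg h1, add_zero] at e
              exact e
            have hjD : (j+1) ∈ smalls n i v \ smalls n i u := Finset.mem_sdiff.mpr ⟨hvj1, h2⟩
            have hjD' : j ∉ (smalls n i v \ smalls n i u).erase (j+1) := by
              intro h
              rw [Finset.mem_erase, Finset.mem_sdiff] at h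
              exact hvj h.2.1
            by_cases ha : posLT n i j v < posLT n i j u
            · have hDomuvs : Dom n i u (v * sAdj j) := by
                intro t
                rcases eq_or_ne t (j+1) with rfl | hne'
                · rw [e_vs, e_u]; omega
                · rw [hpvs t hne']; exact hDom t
              have hRuvs : R u (v * sAdj j) = Phi n i u (v * sAdj j) :=
                ih (v * sAdj j) (by omega) hvsOn hvsM u hu hMu hDomuvs
              have hD1 : smalls n i (v * sAdj j) \ smalls n i u
                  = insert j ((smalls n i v \ smalls n i u).erase (j+1)) := by
                ext r
                rw [Finset.mem_insert, Finset.mem_erase, Finset.mem_sdiff, Finset.mem_sdiff]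
                rcases eq_or_ne r j with rfl | hr1
                · rw [mem_smalls_mul_sAdj_left hj1 hjn1]
                  constructor
                  · intro _; exact Or.inl rfl
                  · intro _; exact ⟨hvj1, h1⟩
                · rcases eq_or_ne r (j+1) with rfl | hr2
                  · rw [mem_smalls_mul_sAdj_right hj1 hjn1]
                    constructor
                    · rintro ⟨hh, -⟩; exact absurd hh hvj
                    · rintro (h | ⟨hh, -⟩)
                      · exact absurd h (by omega)
                      · exact absurd rfl hh
                  · rw [mem_smalls_mul_sAdj_other hr1 hr2]
                    constructor
                    · rintro ⟨ha', hb'⟩; exact Or.inr ⟨hr2, ha', hb'⟩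
                    · rintro (h | ⟨-, ha', hb'⟩)
                      · exact absurd h hr1
                      · exact ⟨ha', hb'⟩
              have hPhi_u_vs : Phi n i u (v * sAdj j)
                  = (-1) ^ (invNum n v - invNum n u - 1)
                    * ((1 - X ^ (posLT n i j u - posLT n i j v))
                      * ∏ r ∈ (smalls n i v \ smalls n i u).erase (j+1),
                          (1 - X ^ (posLT n i r u - posLT n i r v))) := by
                unfold Phi
                rw [hD1, Finset.prod_insert hjD']
                have hsg : invNum n (v * sAdj j) - invNum n u
                    = invNum n v - invNum n u - 1 := by omega
                rw [hsg]
                have hej2 : posLT n i j (v * sAdj j) = posLT n i j v := posLT_mul_sAdj_le le_rfl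
                rw [hej2]
                congr 2
                apply Finset.prod_congr rfl
                intro r hr
                rw [Finset.mem_erase] at hr
                rw [hpvs r hr.1]
              have hPhi_uv : Phi n i u v
                  = (-1) ^ (invNum n v - invNum n u)
                    * ((1 - X ^ (posLT n i j u - posLT n i j v))
                      * ∏ r ∈ (smalls n i v \ smalls n i u).erase (j+1),
                          (1 - X ^ (posLT n i r u - posLT n i r v))) := by
                unfold Phi
                rw [← Finset.mul_prod_erase _ _ hjD]
                have hexp : posLT n i (j+1) u - posLT n i (j+1) v
                    = posLT n i j u - posLT n i j v := by omega
                rw [hexp]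
              rw [hTri.2.2 hud hus, hRuvs, hPhi_u_vs, hPhi_uv]
              obtain ⟨k, hk⟩ : ∃ k, invNum n v - invNum n u = k + 1 := ⟨_, (by omega :
                invNum n v - invNum n u = (invNum n v - invNum n u - 1) + 1)⟩
              rw [hk]
              have h1' : k + 1 - 1 = k := by omega
              rw [h1']
              ring
            · -- degenerate : factor vanishes
              have hndom : ¬ Dom n i u (v * sAdj j) := by
                intro hD'
                have := hD' (j+1)
                rw [e_vs, e_u] at this
                omega
              have hnb : ¬ BruhatLE n u (v * sAdj j) :=
                fun hB' => hndom (dom_of_bruhat hu hB')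
              have hR0 : R u (v * sAdj j) = 0 := hR.1 _ _ hMu hvsM hnb
              rw [hTri.2.2 hud hus, hR0, neg_zero]
              symm
              unfold Phi
              rw [← Finset.mul_prod_erase _ _ hjD]
              have h0 : posLT n i (j+1) u - posLT n i (j+1) v = 0 := by omega
              rw [h0, pow_zero, sub_self, zero_mul, mul_zero]



end Brenti

/-- Brenti's formula for the parabolic `R`-polynomials with `J = S \ {s_i}`. -/
theorem brenti_formula_one (n i : ℕ) (hi1 : 1 ≤ i) (hi2 : i ≤ n - 1)
    (u v : Equiv.Perm ℕ) (hu : IsPermOn n u) (hv : IsPermOn n v)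
    (hu' : MinReps n {i} u) (hv' : MinReps n {i} v) (huv : BruhatLE n u v)
    (R : Equiv.Perm ℕ → Equiv.Perm ℕ → Polynomial ℤ) (hR : IsRFamilyQ n {i} R) :
    R u v = (-1) ^ (invNum n v - invNum n u) *
      ∏ j ∈ ((Finset.Icc 1 n).filter (fun r => v r ∈ Finset.Icc 1 i)) \
             ((Finset.Icc 1 n).filter (fun r => u r ∈ Finset.Icc 1 i)),
        (1 - X ^ ((posLT n i j u : ℤ) - posLT n i j v).toNat) := by
  
  classical
  have hDom : Brenti.Dom n i u v := Brenti.dom_of_bruhat hu huv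
  have hmain := Brenti.main_induction hi1 hi2 R hR (invNum n v) v le_rfl hv hv' u hu hu' hDom
  rw [hmain]
  unfold Brenti.Phi
  congr 1
  apply Finset.prod_congr rfl
  intro r _
  have h : (posLT n i r u - posLT n i r v)
      = ((posLT n i r u : ℤ) - (posLT n i r v : ℤ)).toNat := by omega
  rw [h]
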